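/- Let p be a positive integer and β > p, and suppose β₀ := β/p is an odd integer. Then for every nonzero integer u with |u| ≥ (β₀+1)/2, the interval I_u = (β/(2u+1), β/(2u-1)) is contained in (-p, p), and U_β maps I_u onto (-p, p). -/

import Mathlib

/-- The signed fractional part `{t}₂`: the unique element of `(-1, 1]` with `t - {t}₂ ∈ 2ℤ`. -/
noncomputable def fract2 (t : ℝ) : ℝ := t - 2 * ⌈(t - 1) / 2⌉

/-- The Gauss-type map `U_β(x) = p·{-β/x}₂`, with `U_β(0) = 0`. -/
noncomputable def Ubeta (p β : ℝ) (x : ℝ) : ℝ := if x = 0 then 0 else p * fract2 (-β / x)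

private lemma div_lt_div_ss {β a t : ℝ} (hβ : 0 < β) (h : a < t) (hs : 0 < a * t) :
    β / t < β / a := by
  have ha : a ≠ 0 := by rintro rfl; simp at hs
  have ht : t ≠ 0 := by rintro rfl; simp at hs
  have key : β / a - β / t = β * (t - a) / (a * t) := by field_simp
  have hpos : 0 < β * (t - a) / (a * t) := div_pos (by nlinarith) hs
  linarith

private lemma div_le_div_ss {β a t : ℝ} (hβ : 0 < β) (h : a ≤ t) (hs : 0 < a * t) :
    β / t ≤ β / a := by
  rcases eq_or_lt_of_le h with rfl | h
  · exact le_refl _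
  · exact (div_lt_div_ss hβ h hs).le

private lemma mem_div_Ioo {β c d : ℝ} (hβ : 0 < β) (hcd : c < d) (hs : 0 < c * d) (x : ℝ) :
    x ∈ Set.Ioo (β / d) (β / c) ↔ x ≠ 0 ∧ β / x ∈ Set.Ioo c d := by
  have hc : c ≠ 0 := by rintro rfl; simp at hs
  have hd : d ≠ 0 := by rintro rfl; simp at hs
  have hβc : β / (β / c) = c := by field_simp
  have hβd : β / (β / d) = d := by field_simp
  constructor
  · rintro ⟨h1, h2⟩
    have hx0 : x ≠ 0 := by
      rcases lt_or_gt_of_ne hc with hcneg | hcpos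
      · have hdneg : d < 0 := by nlinarith
        have : β / c < 0 := div_neg_of_pos_of_neg hβ hcneg
        exact ne_of_lt (by linarith)
      · have hdpos : 0 < d := by linarith
        have : 0 < β / d := div_pos hβ hdpos
        exact ne_of_gt (by linarith)
    refine ⟨hx0, ?_, ?_⟩
    · have hsx : 0 < x * (β / c) := by
        rcases lt_or_gt_of_ne hc with hcneg | hcpos
        · have hdneg : d < 0 := by nlinarith
          have h3 : β / c < 0 := div_neg_of_pos_of_neg hβ hcneg
          exact mul_pos_of_neg_of_neg (by linarith) h3
        · have hdpos : 0 < d := by linarith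
          have h3 : 0 < β / d := div_pos hβ hdpos
          exact mul_pos (by linarith) (div_pos hβ hcpos)
      have := div_lt_div_ss hβ h2 hsx
      rwa [hβc] at this
    · have hsx : 0 < (β / d) * x := by
        rcases lt_or_gt_of_ne hc with hcneg | hcpos
        · have hdneg : d < 0 := by nlinarith
          have h3 : β / d < 0 := div_neg_of_pos_of_neg hβ hdneg
          have h4 : β / c < 0 := div_neg_of_pos_of_neg hβ hcneg
          exact mul_pos_of_neg_of_neg h3 (by linarith)
        · have hdpos : 0 < d := by linarith
          have h3 : 0 < β / d := div_pos hβ hdpos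
          exact mul_pos h3 (by linarith)
      have := div_lt_div_ss hβ h1 hsx
      rwa [hβd] at this
  · rintro ⟨hx0, h1, h2⟩
    have hβx : β / (β / x) = x := by field_simp
    constructor
    · have hsx : 0 < (β / x) * d := by
        rcases lt_or_gt_of_ne hc with hcneg | hcpos
        · have hdneg : d < 0 := by nlinarith
          exact mul_pos_of_neg_of_neg (by linarith) hdneg
        · exact mul_pos (by linarith) (by linarith)
      have := div_lt_div_ss hβ h2 hsx
      rwa [hβx] at this
    · have hsx : 0 < c * (β / x) := by
        rcases lt_or_gt_of_ne hc with hcneg | hcpos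
        · have hdneg : d < 0 := by nlinarith
          exact mul_pos_of_neg_of_neg hcneg (by linarith)
        · exact mul_pos hcpos (by linarith)
      have := div_lt_div_ss hβ h1 hsx
      rwa [hβx] at this

private lemma fract2_eq (m : ℤ) (t : ℝ) (h1 : 2 * (m : ℝ) - 1 < t) (h2 : t ≤ 2 * m + 1) :
    fract2 t = t - 2 * m := by
  unfold fract2
  have hce : ⌈(t - 1) / 2⌉ = m := by
    rw [Int.ceil_eq_iff]
    constructor
    · rw [lt_div_iff₀ (by norm_num : (0:ℝ) < 2)]
      linarith
    · rw [div_le_iff₀ (by norm_num : (0:ℝ) < 2)]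
      linarith
  rw [hce]

theorem Ubeta_filling_odd (p : ℕ) (hp : 0 < p) (β : ℝ) (hβ : (p : ℝ) < β)
    (hodd : ∃ k : ℤ, β / p = 2 * (k : ℝ) + 1)
    (u : ℤ) (hu : u ≠ 0) (hu2 : (β / p + 1) / 2 ≤ |(u : ℝ)|) :
    Set.Ioo (β / (2 * (u : ℝ) + 1)) (β / (2 * (u : ℝ) - 1)) ⊆ Set.Ioo (-(p : ℝ)) p ∧
    Ubeta p β '' Set.Ioo (β / (2 * (u : ℝ) + 1)) (β / (2 * (u : ℝ) - 1))
      = Set.Ioo (-(p : ℝ)) p := by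
  obtain ⟨k, hk⟩ := hodd
  have hp' : (0:ℝ) < p := by exact_mod_cast hp
  have hβ0 : (0:ℝ) < β := hp'.trans hβ
  rw [hk] at hu2
  have hu2' : (k:ℝ) + 1 ≤ |(u:ℝ)| := by linarith
  rw [div_eq_iff hp'.ne'] at hk
  have hβeq : β = (2 * (k:ℝ) + 1) * p := hk
  have hk1 : (1:ℝ) ≤ (k:ℝ) := by
    have h0 : (0:ℝ) < (k:ℝ) := by nlinarith
    have h0' : (0:ℤ) < k := by exact_mod_cast h0
    exact_mod_cast h0'
  have huabs : (1:ℝ) ≤ |(u:ℝ)| := by linarith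
  have husq : (1:ℝ) ≤ (u:ℝ)^2 := by nlinarith [sq_abs (u:ℝ)]
  have hs : 0 < (2 * (u:ℝ) - 1) * (2 * u + 1) := by nlinarith
  have hmem := mem_div_Ioo (β := β) (c := 2 * (u:ℝ) - 1) (d := 2 * (u:ℝ) + 1) hβ0
      (by linarith) hs
  have hU : ∀ x ∈ Set.Ioo (β / (2 * (u : ℝ) + 1)) (β / (2 * (u : ℝ) - 1)),
      Ubeta p β x = p * (2 * u - β / x) := by
    intro x hx
    obtain ⟨hx0, hfx1, hfx2⟩ := (hmem x).1 hx
    unfold Ubeta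
    rw [if_neg hx0, neg_div, fract2_eq (-u) (-(β / x)) (by push_cast; linarith)
      (by push_cast; linarith)]
    push_cast
    ring
  have hsubset : Set.Ioo (β / (2 * (u : ℝ) + 1)) (β / (2 * (u : ℝ) - 1)) ⊆
      Set.Ioo (-(p : ℝ)) p := by
    intro x hx
    obtain ⟨h1, h2⟩ := hx
    rcases hu.lt_or_gt with hneg | hpos
    · have huR : (u:ℝ) < 0 := by exact_mod_cast hneg
      have hu1 : (u:ℝ) ≤ -((k:ℝ) + 1) := by
        rw [abs_of_neg huR] at hu2'; linarith
      have hb : β / (2 * (u:ℝ) - 1) < 0 :=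
        div_neg_of_pos_of_neg hβ0 (by linarith)
      have h2k : (2 * (k:ℝ) + 1) ≠ 0 := by positivity
      have ha : -(p:ℝ) ≤ β / (2 * (u:ℝ) + 1) := by
        have hle := div_le_div_ss (β := β) (a := 2 * (u:ℝ) + 1) (t := -(2 * (k:ℝ) + 1))
          hβ0 (by linarith) (by nlinarith)
        have heq : β / (-(2 * (k:ℝ) + 1)) = -p := by
          rw [hβeq, div_neg, mul_div_assoc]
          field_simp
        linarith
      exact ⟨by linarith, by linarith⟩
    · have huR : (0:ℝ) < (u:ℝ) := by exact_mod_cast hpos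
      have hu1 : (k:ℝ) + 1 ≤ (u:ℝ) := by
        rw [abs_of_pos huR] at hu2'; exact hu2'
      have ha : 0 < β / (2 * (u:ℝ) + 1) := div_pos hβ0 (by linarith)
      have hb : β / (2 * (u:ℝ) - 1) ≤ p := by
        have hle := div_le_div_ss (β := β) (a := 2 * (k:ℝ) + 1) (t := 2 * (u:ℝ) - 1)
          hβ0 (by linarith) (by nlinarith)
        have heq : β / (2 * (k:ℝ) + 1) = p := by
          rw [hβeq, mul_div_assoc]
          field_simp
        linarith
      exact ⟨by linarith, by linarith⟩
  refine ⟨hsubset, ?_⟩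
  ext y
  constructor
  · rintro ⟨x, hx, rfl⟩
    obtain ⟨hx0, hfx1, hfx2⟩ := (hmem x).1 hx
    rw [hU x hx]
    exact ⟨by nlinarith, by nlinarith⟩
  · rintro ⟨hy1, hy2⟩
    have h1 : y / p < 1 := (div_lt_one hp').2 hy2
    have h2 : -1 < y / p := by
      rw [neg_lt, ← neg_div]
      exact (div_lt_one hp').2 (by linarith)
    set t : ℝ := 2 * (u:ℝ) - y / p with htdef
    have ht1 : 2 * (u:ℝ) - 1 < t := by rw [htdef]; linarith
    have ht2 : t < 2 * (u:ℝ) + 1 := by rw [htdef]; linarith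
    have ht0 : t ≠ 0 := by
      rcases hu.lt_or_gt with hneg | hpos
      · have : u ≤ -1 := by omega
        have huR : (u:ℝ) ≤ -1 := by exact_mod_cast this
        have : t < 0 := by linarith
        exact ne_of_lt this
      · have : 1 ≤ u := by omega
        have huR : (1:ℝ) ≤ (u:ℝ) := by exact_mod_cast this
        have : 0 < t := by linarith
        exact ne_of_gt this
    have hxt : β / (β / t) = t := by field_simp
    have hx0 : β / t ≠ 0 := div_ne_zero hβ0.ne' ht0
    have hxmem : β / t ∈ Set.Ioo (β / (2 * (u : ℝ) + 1)) (β / (2 * (u : ℝ) - 1)) := by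
      rw [hmem]
      exact ⟨hx0, by rw [hxt]; exact ⟨ht1, ht2⟩⟩
    refine ⟨β / t, hxmem, ?_⟩
    rw [hU _ hxmem, hxt, htdef]
    field_simp
    ring
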